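/- Under the same hypotheses as the atomic-operator theorem, for w ∈ W^λ and i ∈ I: F_i(A_w(λ)) = A_w(λ) if s_i w < w or s_i w ∉ W^λ, and F_i(A_w(λ)) = A_w(λ) ⊔ A_{s_i w}(λ) (disjoint union) if w < s_i w and s_i w ∈ W^λ. -/

import Mathlib

/-- A (normal) crystal graph structure: a set `B` with partial raising and lowering
operators `e i`, `f i` satisfying `f i x = some y ↔ e i y = some x`. -/
structure Crystal (I B : Type*) where
  e : I → B → Option B
  f : I → B → Option B
  ef : ∀ i x y, f i x = some y ↔ e i y = some x

namespace Crystal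

variable {I B : Type*} (c : Crystal I B)

/-- One raising step along `i`. -/
def eStep (i : I) (x y : B) : Prop := c.e i x = some y

/-- One lowering step along `i`. -/
def fStep (i : I) (x y : B) : Prop := c.f i x = some y

/-- `y` lies on the same `i`-string as `x` (equivalence generated by raising steps). -/
def SameString (i : I) : B → B → Prop := Relation.EqvGen (c.eStep i)

/-- The `i`-string through `x`. -/
def string (i : I) (x : B) : Set B := {y | c.SameString i x y}

/-- `u` is a top (highest weight) element of its `i`-string, i.e. `e i u = 0`. -/
def IsTop (i : I) (u : B) : Prop := c.e i u = none

/-- A subset `X ⊆ B` is extremal if for every `i`-string `S`,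
`X ∩ S ∈ {∅, {u_S}, S}`, where `u_S` is the top element of `S`. -/
def Extremal (X : Set B) : Prop :=
  ∀ (i : I) (x : B),
    X ∩ c.string i x = ∅ ∨
    (∃ u ∈ c.string i x, c.IsTop i u ∧ X ∩ c.string i x = {u}) ∨
    c.string i x ⊆ X

/-- A raising step along some index. -/
def raiseStep (x y : B) : Prop := ∃ i, c.e i x = some y

/-- A lowering step along some index. -/
def lowerStep (x y : B) : Prop := ∃ i, c.f i x = some y

/-- `E(L)`: the closure of `L` under the raising operators. -/
def eClosure (L : Set B) : Set B :=
  {y | ∃ z ∈ L, Relation.ReflTransGen c.raiseStep z y}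

/-- `b` is the highest weight element of a connected highest weight crystal:
it is killed by every raising operator, and every element is reachable from `b`
by applying lowering operators. -/
def IsHighestWeight (b : B) : Prop :=
  (∀ i, c.e i b = none) ∧ ∀ x, Relation.ReflTransGen c.lowerStep b x

/-- `x` is a lowest weight element of `X`: for each `i`, `f i x = 0` or `f i x ∉ X`. -/
def IsLowest (X : Set B) (x : B) : Prop :=
  x ∈ X ∧ ∀ i, c.f i x = none ∨ ∀ y, c.f i x = some y → y ∉ X

/-- `f_i^*`: `y` is obtained from `x` by applying `f i` maximally. -/
def fStarRel (i : I) (x y : B) : Prop :=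
  Relation.ReflTransGen (c.fStep i) x y ∧ c.f i y = none

/-- `y = f_{i_k}^* ⋯ f_{i_1}^* (x)` for the list of indices `[i_1, …, i_k]`. -/
def fStarChain : B → List I → B → Prop
  | x, [], y => y = x
  | x, i :: l, y => ∃ z, c.fStarRel i x z ∧ fStarChain z l y

end Crystal

namespace Crystal

/-- Iterated lowering operator `f_i^d`. -/
def fIter {I B : Type*} (c : Crystal I B) (i : I) : ℕ → B → Option B
  | 0, x => some x
  | d + 1, x => (c.f i x).bind (fIter c i d)

/-- The operator `F_i(X) = { f_i^d (x) : x ∈ X, d ≥ 0 } ∖ {0}`. -/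
def Fset {I B : Type*} (c : Crystal I B) (i : I) (X : Set B) : Set B :=
  {y | ∃ x ∈ X, ∃ d : ℕ, c.fIter i d x = some y}

/-- The atomic operator `𝒜_i(X) = F_i(X) ∖ X`. -/
def atomOp {I B : Type*} (c : Crystal I B) (i : I) (X : Set B) : Set B :=
  c.Fset i X \ X

/-- `atomChain c x [i_1, …, i_k] y` holds iff `y = f_{i_k}^{d_k} ⋯ f_{i_1}^{d_1} (x)`
for some `d_1, …, d_k > 0`, with each intermediate element annihilated by the raising
operator about to be applied: `e_{i_j} (f_{i_{j-1}}^{d_{j-1}} ⋯ f_{i_1}^{d_1} (x)) = 0`. -/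
def atomChain {I B : Type*} (c : Crystal I B) : B → List I → B → Prop
  | x, [], y => y = x
  | x, i :: l, y => c.e i x = none ∧ ∃ z, (∃ d : ℕ, 0 < d ∧ c.fIter i d x = some z) ∧
      atomChain c z l y

end Crystal

/-- Bruhat order via the subword property. -/
def bruhatLE {I W : Type*} [Group W] {M : CoxeterMatrix I} (cs : CoxeterSystem M W)
    (v w : W) : Prop :=
  ∀ ω : List I, cs.IsReduced ω → cs.wordProd ω = w →
    ∃ ω' : List I, ω'.Sublist ω ∧ cs.IsReduced ω' ∧ cs.wordProd ω' = v

/-- Strict Bruhat order. -/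
def bruhatLT {I W : Type*} [Group W] {M : CoxeterMatrix I} (cs : CoxeterSystem M W)
    (v w : W) : Prop :=
  bruhatLE cs v w ∧ v ≠ w

set_option linter.unusedSectionVars false

namespace Crystal

variable {I X : Type*} (c : Crystal I X)

theorem fIter_add_eq (i : I) :
    ∀ (d : ℕ) (x y : X), c.fIter i d x = some y →
      ∀ (e : ℕ) (z : X), c.fIter i e y = some z → c.fIter i (d + e) x = some z := by
  intro d
  induction d with
  | zero =>
    intro x y h e z he
    have : x = y := Option.some.inj h
    rw [Nat.zero_add, this]
    exact he
  | succ d ih =>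
    intro x y h e z he
    have hh : (c.f i x).bind (c.fIter i d) = some y := h
    rcases Option.bind_eq_some_iff.mp hh with ⟨x', hx', hd'⟩
    rw [show d + 1 + e = (d + e) + 1 from by omega]
    show (c.f i x).bind (c.fIter i (d + e)) = some z
    rw [hx', Option.bind_some]
    exact ih x' y hd' e z he

theorem fIter_pred (i : I) :
    ∀ (d : ℕ) (u x : X), 0 < d → c.fIter i d u = some x → ∃ z, c.f i z = some x := by
  intro d
  induction d with
  | zero => intro u x h; simp at h
  | succ d ih =>
    intro u x _ h
    have hh : (c.f i u).bind (c.fIter i d) = some x := h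
    rcases Option.bind_eq_some_iff.mp hh with ⟨z, hz, hzd⟩
    rcases Nat.eq_zero_or_pos d with h0 | hpos
    · subst h0
      have : z = x := Option.some.inj hzd
      subst this
      exact ⟨u, hz⟩
    · exact ih z x hpos hzd

theorem fIter_sameString (i : I) :
    ∀ (d : ℕ) (x y : X), c.fIter i d x = some y → c.SameString i x y := by
  intro d
  induction d with
  | zero =>
    intro x y h
    have : x = y := Option.some.inj h
    rw [this]
    exact Relation.EqvGen.refl y
  | succ d ih =>
    intro x y h
    have hh : (c.f i x).bind (c.fIter i d) = some y := h
    rcases Option.bind_eq_some_iff.mp hh with ⟨z, hz, hzd⟩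
    have h1 : c.eStep i z x := (c.ef i x z).mp hz
    have h2 : c.SameString i x z := Relation.EqvGen.symm _ _ (Relation.EqvGen.rel z x h1)
    exact Relation.EqvGen.trans _ _ _ h2 (ih z y hzd)

end Crystal

namespace CrystalAux

open List CoxeterSystem

theorem zmod2_add_self : ∀ a : ZMod 2, a + a = 0 := by decide

theorem zmod2_cases : ∀ a : ZMod 2, a = 0 ∨ a = 1 := by decide

variable {B W : Type*} [Group W] {M : CoxeterMatrix B} (cs : CoxeterSystem M W)

local prefix:100 "s" => cs.simple
local prefix:100 "π" => cs.wordProd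
local prefix:100 "ℓ" => cs.length

open scoped Classical

/-- Parity count of `t` in a list, valued in `ZMod 2`. -/
noncomputable def nsum (l : List W) (t : W) : ZMod 2 :=
  (l.map (fun r => if r = t then (1 : ZMod 2) else 0)).sum

theorem nsum_nil (t : W) : nsum ([] : List W) t = 0 := rfl

theorem nsum_cons (a : W) (l : List W) (t : W) :
    nsum (a :: l) t = (if a = t then (1 : ZMod 2) else 0) + nsum l t := by
  simp [nsum]

theorem nsum_append (l l' : List W) (t : W) :
    nsum (l ++ l') t = nsum l t + nsum l' t := by
  simp [nsum]

theorem nsum_concat (l : List W) (a t : W) :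
    nsum (l.concat a) t = nsum l t + (if a = t then (1 : ZMod 2) else 0) := by
  simp [nsum]

theorem nsum_map_conj (l : List W) (z t : W) :
    nsum (l.map (MulAut.conj z)) t = nsum l (z⁻¹ * t * z) := by
  unfold nsum
  rw [List.map_map]
  congr 1
  apply List.map_congr_left
  intro r _
  simp only [Function.comp_apply, MulAut.conj_apply]
  congr 1
  apply propext
  constructor
  · rintro rfl; group
  · rintro rfl; group

theorem mem_of_nsum_eq_one {l : List W} {t : W} (h : nsum l t = 1) : t ∈ l := by
  induction l with
  | nil => exact absurd h (by rw [nsum_nil]; decide)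
  | cons a l ih =>
    rw [nsum_cons] at h
    by_cases hat : a = t
    · exact hat ▸ List.mem_cons_self
    · rw [if_neg hat, zero_add] at h
      exact List.mem_cons_of_mem a (ih h)

/-- The twisting involution underlying the reflection (parity) representation. -/
noncomputable def phiFun (i : B) : W × ZMod 2 → W × ZMod 2 :=
  fun p => (s i * p.1 * s i, p.2 + if p.1 = s i then 1 else 0)

theorem phiFun_cond_iff (i : B) (x : W) : (s i * x * s i = s i) ↔ (x = s i) := by
  constructor
  · intro h
    have h2 := congrArg (fun z => s i * z * s i) h
    simpa [mul_assoc] using h2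
  · rintro rfl; simp

theorem phiFun_involutive (i : B) : Function.Involutive (phiFun cs i) := by
  intro p
  unfold phiFun
  dsimp only
  have hc := phiFun_cond_iff cs i p.1
  ext
  · simp [mul_assoc]
  · show p.2 + _ + _ = p.2
    simp only [hc]
    rw [add_assoc, zmod2_add_self, add_zero]

/-- The permutation of `W × ZMod 2` attached to the simple reflection `i`. -/
noncomputable def phi (i : B) : Equiv.Perm (W × ZMod 2) :=
  Function.Involutive.toPerm _ (phiFun_involutive cs i)

theorem phi_apply (i : B) (p : W × ZMod 2) : phi cs i p = phiFun cs i p := rfl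

theorem prod_phi_eval (ρ : List B) (t : W) (z : ZMod 2) :
    ((ρ.map (phi cs)).prod) (t, z) = (π ρ * t * (π ρ)⁻¹, z + nsum (cs.rightInvSeq ρ) t) := by
  induction ρ with
  | nil => simp [nsum_nil]
  | cons a ω ih =>
    rw [List.map_cons, List.prod_cons, Equiv.Perm.mul_apply, ih]
    have hris : cs.rightInvSeq (a :: ω) = ((π ω)⁻¹ * s a * π ω) :: cs.rightInvSeq ω := rfl
    rw [hris, nsum_cons, phi_apply]
    unfold phiFun
    dsimp only
    have hcond : (π ω * t * (π ω)⁻¹ = s a) ↔ ((π ω)⁻¹ * s a * π ω = t) := by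
      constructor
      · intro h; rw [← h]; group
      · intro h; rw [← h]; group
    ext
    · show s a * (π ω * t * (π ω)⁻¹) * s a = π (a :: ω) * t * (π (a :: ω))⁻¹
      rw [wordProd_cons, mul_inv_rev, cs.inv_simple]
      group
    · show z + nsum (cs.rightInvSeq ω) t + _ = z + (_ + nsum (cs.rightInvSeq ω) t)
      simp only [hcond]
      ring

theorem alternatingWord_drop (a b : B) (n k : ℕ) :
    (alternatingWord a b n).drop k = alternatingWord a b (n - k) := by
  induction n generalizing k with
  | zero => simp [alternatingWord]
  | succ n ih =>
    cases k with
    | zero => simp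
    | succ k =>
      rw [alternatingWord_succ', List.drop_succ_cons, ih, Nat.succ_sub_succ]

theorem ris_getD (ρ : List B) (k : ℕ) (hk : k < ρ.length) :
    (cs.rightInvSeq ρ).getD k 1 = (π (ρ.drop (k + 1)))⁻¹ * π (ρ.drop k) := by
  induction ρ generalizing k with
  | nil => simp at hk
  | cons a ω ih =>
    cases k with
    | zero =>
      show (((π ω)⁻¹ * s a * π ω) :: cs.rightInvSeq ω).getD 0 1 = _
      rw [List.getD_cons_zero]
      show (π ω)⁻¹ * s a * π ω = (π ((a :: ω).drop 1))⁻¹ * π ((a :: ω).drop 0)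
      rw [List.drop_one, List.tail_cons, List.drop_zero, wordProd_cons, mul_assoc]
    | succ k =>
      show ((_ : W) :: cs.rightInvSeq ω).getD (k + 1) 1 = _
      rw [List.getD_cons_succ, List.drop_succ_cons, List.drop_succ_cons]
      exact ih k (by simpa using hk)

theorem pow_phi_eq (i j : B) (m : ℕ) :
    (phi cs i * phi cs j) ^ m = ((alternatingWord i j (2 * m)).map (phi cs)).prod := by
  induction m with
  | zero => simp [alternatingWord]
  | succ m ih =>
    have h2 : 2 * (m + 1) = (2 * m + 1) + 1 := by ring
    rw [h2, alternatingWord_succ', if_neg (by simp [Nat.even_add_one, Nat.even_mul]),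
      alternatingWord_succ', if_pos (even_two_mul m), List.map_cons, List.map_cons,
      List.prod_cons, List.prod_cons, pow_succ', ih, mul_assoc]

theorem nsum_ris_alternatingWord (i j : B) (t : W) :
    nsum (cs.rightInvSeq (alternatingWord i j (2 * M.M i j))) t = 0 := by
  set m := M.M i j with hm
  set ρ := alternatingWord i j (2 * m) with hρ
  set v : ℕ → W := fun r => π (alternatingWord j i r) with hv
  set q : W := s j * s i with hqdef
  have hρlen : ρ.length = 2 * m := length_alternatingWord i j (2 * m)
  have hD : ∀ k, k ≤ 2 * m → π (ρ.drop k) = v k := by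
    intro k hk
    rw [hρ, alternatingWord_drop]
    have h := cs.prod_alternatingWord_eq_prod_alternatingWord_sub i j (2 * m - k)
      (by omega)
    rw [h]
    congr 2
    omega
  have hq : q ^ m = 1 := by
    have h := cs.simple_mul_simple_pow j i
    rwa [M.symmetric j i, ← hm, ← hqdef] at h
  have hxx : s i * s i = 1 := cs.simple_mul_simple_self i
  have hxq : ∀ a : ℕ, s i * q ^ a * s i = (q ^ a)⁻¹ := by
    intro a
    have h1 : s i * q * (s i)⁻¹ = q⁻¹ := by
      rw [hqdef, cs.inv_simple, mul_inv_rev, cs.inv_simple, cs.inv_simple]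
      simp [mul_assoc]
    calc s i * q ^ a * s i = s i * q ^ a * (s i)⁻¹ := by rw [cs.inv_simple]
    _ = (s i * q * (s i)⁻¹) ^ a := by rw [conj_pow]
    _ = (q⁻¹) ^ a := by rw [h1]
    _ = (q ^ a)⁻¹ := by rw [inv_pow]
  have hvf : ∀ r, v r = (if Even r then 1 else s i) * q ^ (r / 2) :=
    fun r => cs.prod_alternatingWord_eq_mul_pow j i r
  have hper : ∀ r, r ≤ m → v (r + m) = v m * v r := by
    intro r hr
    rcases Nat.even_or_odd m with hme | hmo <;> rcases Nat.even_or_odd r with hre | hro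
    · obtain ⟨b, hb⟩ := hme; obtain ⟨a, ha⟩ := hre
      have p1 : Even (r + m) := ⟨a + b, by omega⟩
      have e1 : (r + m) / 2 = b + a := by omega
      have e2 : m / 2 = b := by omega
      have e3 : r / 2 = a := by omega
      rw [hvf (r + m), hvf m, hvf r, if_pos p1, if_pos ⟨b, hb⟩, if_pos ⟨a, ha⟩,
        one_mul, one_mul, one_mul, e1, e2, e3, pow_add]
    · -- m even, r odd
      obtain ⟨b, hb⟩ := hme; obtain ⟨a, ha⟩ := hro
      have hbb : q ^ b * q ^ b = 1 := by rw [← pow_add, show b + b = m by omega, hq]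
      have hinvb : (q ^ b)⁻¹ = q ^ b := by rw [inv_eq_iff_mul_eq_one, hbb]
      have hcomm : s i * q ^ b = q ^ b * s i := by
        have h2 : s i * q ^ b * s i = q ^ b := by rw [hxq b, hinvb]
        calc s i * q ^ b = s i * q ^ b * (s i * s i) := by rw [hxx, mul_one]
        _ = (s i * q ^ b * s i) * s i := by rw [mul_assoc, mul_assoc, mul_assoc]
        _ = q ^ b * s i := by rw [h2]
      have p1 : ¬ Even (r + m) := by rw [Nat.even_iff]; omega
      have p3 : ¬ Even r := by rw [Nat.even_iff]; omega
      have e1 : (r + m) / 2 = b + a := by omega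
      have e2 : m / 2 = b := by omega
      have e3 : r / 2 = a := by omega
      rw [hvf (r + m), hvf m, hvf r, if_neg p1, if_pos ⟨b, hb⟩, if_neg p3,
        one_mul, e1, e2, e3, pow_add, ← mul_assoc, hcomm, mul_assoc]
    · -- m odd, r even
      obtain ⟨b, hb⟩ := hmo; obtain ⟨a, ha⟩ := hre
      have p1 : ¬ Even (r + m) := by rw [Nat.even_iff]; omega
      have p2 : ¬ Even m := by rw [Nat.even_iff]; omega
      have e1 : (r + m) / 2 = b + a := by omega
      have e2 : m / 2 = b := by omega
      have e3 : r / 2 = a := by omega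
      rw [hvf (r + m), hvf m, hvf r, if_neg p1, if_neg p2, if_pos ⟨a, ha⟩,
        one_mul, e1, e2, e3, pow_add, ← mul_assoc]
    · -- m odd, r odd
      obtain ⟨b, hb⟩ := hmo; obtain ⟨a, ha⟩ := hro
      have key : q ^ (a + b + 1) = (q ^ b)⁻¹ * q ^ a := by
        apply mul_left_cancel (a := q ^ b)
        rw [← mul_assoc, mul_inv_cancel, one_mul, ← pow_add,
          show b + (a + b + 1) = a + m by omega, pow_add, hq, mul_one]
      have p1 : Even (r + m) := ⟨a + b + 1, by omega⟩
      have p2 : ¬ Even m := by rw [Nat.even_iff]; omega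
      have p3 : ¬ Even r := by rw [Nat.even_iff]; omega
      have e1 : (r + m) / 2 = a + b + 1 := by omega
      have e2 : m / 2 = b := by omega
      have e3 : r / 2 = a := by omega
      rw [hvf (r + m), hvf m, hvf r, if_pos p1, if_neg p2, if_neg p3, one_mul,
        e1, e2, e3, key,
        show s i * q ^ b * (s i * q ^ a) = s i * q ^ b * s i * q ^ a from by
          simp [mul_assoc],
        hxq b]
  -- entries
  have hrislen : (cs.rightInvSeq ρ).length = 2 * m := by
    rw [cs.length_rightInvSeq, hρlen]
  have hentry : ∀ k, k < 2 * m → (cs.rightInvSeq ρ).getD k 1 = (v (k + 1))⁻¹ * v k := by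
    intro k hk
    rw [ris_getD cs ρ k (by omega), hD (k + 1) (by omega), hD k (by omega)]
  have hkey : ∀ k, k < m → (cs.rightInvSeq ρ).getD (k + m) 1 = (cs.rightInvSeq ρ).getD k 1 := by
    intro k hk
    rw [hentry (k + m) (by omega), hentry k (by omega)]
    rw [show k + m + 1 = k + 1 + m by omega, hper (k + 1) (by omega), hper k (by omega),
      mul_inv_rev]
    simp [mul_assoc]
  have hsplit : cs.rightInvSeq ρ =
      (cs.rightInvSeq ρ).take m ++ (cs.rightInvSeq ρ).take m := by
    conv_lhs => rw [← List.take_append_drop m (cs.rightInvSeq ρ)]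
    congr 1
    apply List.ext_getElem
    · simp only [List.length_drop, List.length_take, hrislen]
      omega
    · intro n h1 h2
      rw [List.getElem_drop, List.getElem_take]
      have hn : n < m := by
        simp only [List.length_take, hrislen] at h2
        omega
      have hx1 : m + n < (cs.rightInvSeq ρ).length := by rw [hrislen]; omega
      have hx2 : n < (cs.rightInvSeq ρ).length := by rw [hrislen]; omega
      rw [← List.getD_eq_getElem _ 1 hx1, ← List.getD_eq_getElem _ 1 hx2,
        show m + n = n + m by omega]
      exact hkey n hn
  rw [hsplit, nsum_append, zmod2_add_self]

theorem phi_liftable : M.IsLiftable (phi cs) := by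
  intro i j
  rw [pow_phi_eq]
  apply Equiv.ext
  rintro ⟨t, z⟩
  have h1 : π (alternatingWord i j (2 * M.M i j)) = 1 := by
    rw [cs.prod_alternatingWord_eq_mul_pow, if_pos (even_two_mul _),
      one_mul, Nat.mul_div_cancel_left _ (by norm_num : 0 < 2), cs.simple_mul_simple_pow]
  rw [prod_phi_eval, h1, nsum_ris_alternatingWord]
  simp

noncomputable def bigPhi : W →* Equiv.Perm (W × ZMod 2) := cs.lift ⟨phi cs, phi_liftable cs⟩

theorem bigPhi_wordProd (ρ : List B) : bigPhi cs (π ρ) = (ρ.map (phi cs)).prod := by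
  induction ρ with
  | nil => simp
  | cons a ω ih =>
    rw [wordProd_cons, map_mul, ih, List.map_cons, List.prod_cons]
    congr 1
    exact cs.lift_apply_simple (phi_liftable cs) a

theorem nsum_ris_eq {ρ ρ' : List B} (h : π ρ = π ρ') (t : W) :
    nsum (cs.rightInvSeq ρ) t = nsum (cs.rightInvSeq ρ') t := by
  have h1 := prod_phi_eval cs ρ t 0
  have h2 := prod_phi_eval cs ρ' t 0
  rw [← bigPhi_wordProd, h, bigPhi_wordProd, h2] at h1
  have := congrArg Prod.snd h1
  simpa using this.symm

/-- Parity of the number of times `t` occurs in the inversion sequence of any word for `w`. -/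
noncomputable def NN (w t : W) : ZMod 2 :=
  nsum (cs.rightInvSeq (cs.wordProd_surjective w).choose) t

theorem NN_eq (ρ : List B) (t : W) : NN cs (π ρ) t = nsum (cs.rightInvSeq ρ) t :=
  nsum_ris_eq cs ((cs.wordProd_surjective (π ρ)).choose_spec) t

theorem ris_append (l₁ l₂ : List B) :
    cs.rightInvSeq (l₁ ++ l₂) =
      (cs.rightInvSeq l₁).map (MulAut.conj ((π l₂)⁻¹)) ++ cs.rightInvSeq l₂ := by
  induction l₁ with
  | nil => simp
  | cons a l ih =>
    have h1 : cs.rightInvSeq ((a :: l) ++ l₂) =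
        ((π (l ++ l₂))⁻¹ * s a * π (l ++ l₂)) :: cs.rightInvSeq (l ++ l₂) := rfl
    have h2 : cs.rightInvSeq (a :: l) = ((π l)⁻¹ * s a * π l) :: cs.rightInvSeq l := rfl
    rw [h1, h2, ih, List.map_cons, List.cons_append]
    congr 1
    rw [MulAut.conj_apply, wordProd_append]
    group

theorem nsum_ris_refl_word (σ : List B) (i : B) :
    nsum (cs.rightInvSeq (σ ++ i :: σ.reverse)) (π σ * s i * (π σ)⁻¹) = 1 := by
  induction σ with
  | nil => simp [nsum]
  | cons j σ ih =>
    set t' := π σ * s i * (π σ)⁻¹ with ht'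
    have ht'inv : t'⁻¹ = t' := by rw [ht']; simp [mul_inv_rev, mul_assoc]
    have hw : (j :: σ) ++ i :: (j :: σ).reverse = j :: ((σ ++ i :: σ.reverse).concat j) := by
      simp [List.reverse_cons, List.concat_eq_append]
    rw [hw]
    set inner := σ ++ i :: σ.reverse with hinner
    have hπinner : π inner = t' := by
      rw [hinner, wordProd_append, wordProd_cons, wordProd_reverse, ht', mul_assoc]
    have htarget : π (j :: σ) * s i * (π (j :: σ))⁻¹ = s j * t' * s j := by
      rw [wordProd_cons, ht', mul_inv_rev, cs.inv_simple]
      group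
    rw [htarget]
    have hris1 : cs.rightInvSeq (j :: inner.concat j) =
        ((π (inner.concat j))⁻¹ * s j * π (inner.concat j)) :: cs.rightInvSeq (inner.concat j) :=
      rfl
    rw [hris1, nsum_cons, cs.rightInvSeq_concat, nsum_concat, nsum_map_conj]
    have hπc : π (inner.concat j) = t' * s j := by rw [wordProd_concat, hπinner]
    have hconj : (s j)⁻¹ * (s j * t' * s j) * s j = t' := by
      simp [mul_assoc]
    rw [hconj, ih]
    -- conditions
    have hc1 : ((π (inner.concat j))⁻¹ * s j * π (inner.concat j) = s j * t' * s j) ↔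
        (t' = s j) := by
      rw [hπc]
      constructor
      · intro h
        have h2 : s j * (t' * (s j * (t' * s j))) = s j * (t' * s j) := by
          simpa [mul_inv_rev, ht'inv, mul_assoc] using h
        have h3 := mul_left_cancel h2
        have h4 := mul_left_cancel h3
        have h5 : t' * s j = 1 := mul_eq_left.mp h4
        rw [eq_inv_of_mul_eq_one_left h5, cs.inv_simple]
      · intro h
        rw [h]
        simp [mul_assoc]
    have hc2 : (s j = s j * t' * s j) ↔ (t' = s j) := by
      constructor
      · intro h
        have h2 : s j * (t' * s j) = s j := by rw [← mul_assoc]; exact h.symm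
        have h5 : t' * s j = 1 := mul_eq_left.mp h2
        rw [eq_inv_of_mul_eq_one_left h5, cs.inv_simple]
      · intro h
        rw [h]
        simp [mul_assoc]
    by_cases hcase : t' = s j
    · rw [if_pos (hc1.mpr hcase), if_pos (hc2.mpr hcase)]
      decide
    · rw [if_neg (fun hx => hcase (hc1.mp hx)), if_neg (fun hx => hcase (hc2.mp hx))]
      decide

theorem NN_self {t : W} (ht : cs.IsReflection t) : NN cs t t = 1 := by
  obtain ⟨w, i, rfl⟩ := ht
  obtain ⟨σ, rfl⟩ := cs.wordProd_surjective w
  have h := nsum_ris_refl_word cs σ i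
  have hπ : π (σ ++ i :: σ.reverse) = π σ * s i * (π σ)⁻¹ := by
    rw [wordProd_append, wordProd_cons, wordProd_reverse, mul_assoc]
  rw [← hπ, NN_eq]
  rw [← hπ] at h
  exact h

theorem NN_mul_refl (w t : W) (ht : cs.IsReflection t) : NN cs (w * t) t = NN cs w t + 1 := by
  obtain ⟨ρw, hρw⟩ := cs.wordProd_surjective w
  obtain ⟨ρt, hρt⟩ := cs.wordProd_surjective t
  have hw : π (ρw ++ ρt) = w * t := by rw [wordProd_append, hρw, hρt]
  rw [← hw, NN_eq, ris_append, nsum_append, nsum_map_conj]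
  have hcj : ((π ρt)⁻¹)⁻¹ * t * (π ρt)⁻¹ = t := by
    rw [hρt, inv_inv, ht.inv, ht.mul_self, one_mul]
  rw [hcj]
  have h1 : nsum (cs.rightInvSeq ρw) t = NN cs w t := by rw [← hρw, NN_eq]
  have h2 : nsum (cs.rightInvSeq ρt) t = NN cs t t := by rw [← hρt, NN_eq]
  rw [h1, h2, NN_self cs ht]

theorem isRightInversion_of_NN_one {w t : W} (ht : cs.IsReflection t) (h : NN cs w t = 1) :
    cs.IsRightInversion w t := by
  obtain ⟨ω, hred, hw⟩ := cs.exists_reduced_word' w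
  have h1 : nsum (cs.rightInvSeq ω) t = 1 := by rw [← NN_eq, ← hw]; exact h
  have := cs.isRightInversion_of_mem_rightInvSeq hred (mem_of_nsum_eq_one h1)
  rwa [← hw] at this

theorem NN_one_of_isRightInversion {w t : W} (h : cs.IsRightInversion w t) : NN cs w t = 1 := by
  by_contra hne
  have h0 : NN cs w t = 0 := by
    rcases (by decide : ∀ a : ZMod 2, a = 0 ∨ a = 1) (NN cs w t) with h' | h'
    · exact h'
    · exact absurd h' hne
  have h1 : NN cs (w * t) t = 1 := by rw [NN_mul_refl cs w t h.1, h0, zero_add]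
  have h2 := isRightInversion_of_NN_one cs h.1 h1
  have h3 : w * t * t = w := by rw [mul_assoc, h.1.mul_self, mul_one]
  rw [IsRightInversion, h3] at h2
  have := h2.2
  have := h.2
  omega

theorem right_exchange {ω : List B} (hred : cs.IsReduced ω) {t : W}
    (h : cs.IsRightInversion (π ω) t) :
    ∃ ω', ω'.Sublist ω ∧ ω'.length + 1 = ω.length ∧ π ω' = π ω * t := by
  have hN : NN cs (π ω) t = 1 := NN_one_of_isRightInversion cs h
  rw [NN_eq] at hN
  have hmem := mem_of_nsum_eq_one hN
  obtain ⟨k, hk, hkt⟩ := List.getElem_of_mem hmem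
  have hk' : k < ω.length := by rwa [cs.length_rightInvSeq] at hk
  refine ⟨ω.eraseIdx k, List.eraseIdx_sublist ω k, List.length_eraseIdx_add_one hk', ?_⟩
  rw [← cs.wordProd_mul_getD_rightInvSeq ω k]
  congr 1
  rw [List.getD_eq_getElem _ _ hk, hkt]

theorem left_exchange {ω : List B} (hred : cs.IsReduced ω) {i : B}
    (h : ℓ (s i * π ω) < ℓ (π ω)) :
    ∃ ω', ω'.Sublist ω ∧ ω'.length + 1 = ω.length ∧ π ω' = s i * π ω := by
  have hred' : cs.IsReduced ω.reverse := (cs.isReduced_reverse_iff ω).mpr hred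
  have hinv : cs.IsRightInversion (π ω.reverse) (s i) := by
    refine ⟨cs.isReflection_simple i, ?_⟩
    rw [cs.wordProd_reverse]
    have e1 : (π ω)⁻¹ * s i = (s i * π ω)⁻¹ := by
      rw [mul_inv_rev, cs.inv_simple]
    rw [e1, cs.length_inv, cs.length_inv]
    exact h
  obtain ⟨σ, hsub, hlen, hprod⟩ := right_exchange cs hred' hinv
  refine ⟨σ.reverse, ?_, ?_, ?_⟩
  · have := hsub.reverse
    rwa [List.reverse_reverse] at this
  · rw [List.length_reverse]
    rw [List.length_reverse] at hlen
    exact hlen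
  · rw [cs.wordProd_reverse, hprod, cs.wordProd_reverse, mul_inv_rev, inv_inv, cs.inv_simple]

theorem bruhatLE_refl (w : W) : bruhatLE cs w w :=
  fun ω hred hπ => ⟨ω, List.Sublist.refl ω, hred, hπ⟩

theorem bruhatLE_trans {u v w : W} (h1 : bruhatLE cs u v) (h2 : bruhatLE cs v w) :
    bruhatLE cs u w := by
  intro ω hred hw
  obtain ⟨ω1, hs1, hr1, hp1⟩ := h2 ω hred hw
  obtain ⟨ω2, hs2, hr2, hp2⟩ := h1 ω1 hr1 hp1
  exact ⟨ω2, hs2.trans hs1, hr2, hp2⟩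

theorem bruhatLE_length_le {v w : W} (h : bruhatLE cs v w) : ℓ v ≤ ℓ w := by
  obtain ⟨ω, hred, hw⟩ := cs.exists_reduced_word' w
  obtain ⟨τ, hsub, hredτ, hπ⟩ := h ω hred hw.symm
  calc ℓ v = τ.length := by rw [← hπ]; exact hredτ
  _ ≤ ω.length := hsub.length_le
  _ = ℓ w := by rw [← hred, hw]

theorem bruhatLT_length_lt {v w : W} (h : bruhatLT cs v w) : ℓ v < ℓ w := by
  obtain ⟨ω, hred, hw⟩ := cs.exists_reduced_word' w
  obtain ⟨τ, hsub, hredτ, hπ⟩ := h.1 ω hred hw.symm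
  have hne : τ.length ≠ ω.length := by
    intro heq
    have := hsub.eq_of_length heq
    exact h.2 (by rw [← hπ, this, ← hw])
  have h1 : ℓ v = τ.length := by rw [← hπ]; exact hredτ
  have h2 : ℓ w = ω.length := by rw [hw]; exact hred
  have := hsub.length_le
  omega

theorem bruhatLT_of_le_of_lt {u v w : W} (h1 : bruhatLE cs u v) (h2 : bruhatLT cs v w) :
    bruhatLT cs u w := by
  refine ⟨bruhatLE_trans cs h1 h2.1, ?_⟩
  intro h
  have l1 := bruhatLE_length_le cs h1
  have l2 := bruhatLT_length_lt cs h2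
  rw [h] at l1
  omega

theorem bruhatLT_of_lt_of_le {u v w : W} (h1 : bruhatLT cs u v) (h2 : bruhatLE cs v w) :
    bruhatLT cs u w := by
  refine ⟨bruhatLE_trans cs h1.1 h2, ?_⟩
  intro h
  have l1 := bruhatLT_length_lt cs h1
  have l2 := bruhatLE_length_le cs h2
  rw [h] at l1
  omega

/-- `w ≤ s_i w` in Bruhat order when `s_i w` is longer. -/
theorem bruhatLE_simple_mul {w : W} {i : B} (h : ℓ w < ℓ (s i * w)) :
    bruhatLE cs w (s i * w) := by
  have hlen : ℓ (s i * w) = ℓ w + 1 := by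
    rcases cs.length_simple_mul w i with h' | h'
    · exact h'
    · omega
  intro ω hred hπ
  have h2 : ℓ (s i * π ω) < ℓ (π ω) := by
    rw [hπ, cs.simple_mul_simple_cancel_left]
    omega
  obtain ⟨ω', hsub, hlen', hπ'⟩ := left_exchange cs hred h2
  have hπ'' : π ω' = w := by rw [hπ', hπ, cs.simple_mul_simple_cancel_left]
  refine ⟨ω', hsub, ?_, hπ''⟩
  show ℓ (π ω') = ω'.length
  have hω : ℓ (π ω) = ω.length := hred
  rw [hπ] at hω
  rw [hπ'']
  omega

theorem bruhatLT_simple_mul {w : W} {i : B} (h : ℓ w < ℓ (s i * w)) :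
    bruhatLT cs w (s i * w) := by
  refine ⟨bruhatLE_simple_mul cs h, ?_⟩
  intro heq
  rw [← heq] at h
  omega

/-- The lifting property needed: if `v ≤ s_i w`, `w < s_i w`, but `¬ v ≤ w`, then
`s_i v < v` and `s_i v ≤ w`. -/
theorem bruhat_lift {w v : W} {i : B} (hlen : ℓ w < ℓ (s i * w))
    (hv : bruhatLE cs v (s i * w)) (hnv : ¬ bruhatLE cs v w) :
    ℓ (s i * v) < ℓ v ∧ bruhatLE cs (s i * v) w := by
  have hsw : ℓ (s i * w) = ℓ w + 1 := by
    rcases cs.length_simple_mul w i with h' | h'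
    · exact h'
    · omega
  have hredcons : ∀ {ω : List B}, cs.IsReduced ω → π ω = w →
      cs.IsReduced (i :: ω) ∧ π (i :: ω) = s i * w := by
    intro ω hr hp
    have hωl : ℓ w = ω.length := by rw [← hp]; exact hr
    constructor
    · show ℓ (π (i :: ω)) = (i :: ω).length
      rw [wordProd_cons, hp, List.length_cons]
      omega
    · rw [wordProd_cons, hp]
  unfold bruhatLE at hnv
  push_neg at hnv
  obtain ⟨ω₀, hred₀, hπ₀, hbad⟩ := hnv
  have hstep1 : ℓ (s i * v) < ℓ v := by
    obtain ⟨hr1, hp1⟩ := hredcons hred₀ hπ₀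
    obtain ⟨τ, hsub, hredτ, hπτ⟩ := hv _ hr1 hp1
    rcases List.sublist_cons_iff.mp hsub with hcase | ⟨τ', hτ, hsub'⟩
    · exact absurd hπτ (hbad τ hcase hredτ)
    · subst hτ
      have h1 : ℓ v = τ'.length + 1 := by
        rw [← hπτ]
        have hh : ℓ (π (i :: τ')) = (i :: τ').length := hredτ
        simpa using hh
      have h2 : π τ' = s i * v := by
        rw [← hπτ, wordProd_cons, cs.simple_mul_simple_cancel_left]
      have h3 : ℓ (s i * v) ≤ τ'.length := by rw [← h2]; exact cs.length_wordProd_le τ'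
      omega
  have hsv : ℓ (s i * v) + 1 = ℓ v := by
    rcases cs.length_simple_mul v i with h' | h'
    · omega
    · exact h'
  refine ⟨hstep1, ?_⟩
  intro ω hred hπw
  obtain ⟨hr1, hp1⟩ := hredcons hred hπw
  obtain ⟨τ, hsub, hredτ, hπτ⟩ := hv _ hr1 hp1
  have hωl : ℓ w = ω.length := by rw [← hπw]; exact hred
  rcases List.sublist_cons_iff.mp hsub with hcase | ⟨τ', hτ, hsub'⟩
  · -- τ ⊆ ω ; apply the exchange property to τ
    have h2 : ℓ (s i * π τ) < ℓ (π τ) := by rw [hπτ]; exact hstep1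
    obtain ⟨τ'', hsub'', hlen'', hπ''⟩ := left_exchange cs hredτ h2
    have hτl : ℓ v = τ.length := by rw [← hπτ]; exact hredτ
    refine ⟨τ'', hsub''.trans hcase, ?_, by rw [hπ'', hπτ]⟩
    show ℓ (π τ'') = τ''.length
    rw [hπ'', hπτ]
    omega
  · subst hτ
    have h2 : π τ' = s i * v := by
      rw [← hπτ, wordProd_cons, cs.simple_mul_simple_cancel_left]
    have hτl : ℓ v = τ'.length + 1 := by
      rw [← hπτ]
      have hh : ℓ (π (i :: τ')) = (i :: τ').length := hredτ
      simpa using hh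
    refine ⟨τ', hsub', ?_, h2⟩
    show ℓ (π τ') = τ'.length
    rw [h2]
    omega

end CrystalAux

/-- for `w ∈ W^λ` and `i ∈ I`: `F_i(A_w(λ)) = A_w(λ)` if `s_i w < w`
or `s_i w ∉ W^λ`, while `F_i(A_w(λ)) = A_w(λ) ⊔ A_{s_i w}(λ)` (a disjoint union)
if `w < s_i w` and `s_i w ∈ W^λ`. -/
theorem stmt14 {I X W : Type*} [Finite X] [Group W] {M : CoxeterMatrix I}
    (cs : CoxeterSystem M W) (c : Crystal I X)
    -- `b` is the highest weight element of the highest weight crystal `X = B(λ)`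
    (b : X) (hb : c.IsHighestWeight b)
    -- the Demazure crystals `B_w(λ)` and the minimal coset representatives `W^λ`
    (𝔅 : W → Set X) (Wl : Set W)
    -- `W^λ` contains the identity and is closed under length-decreasing left
    -- multiplication by simple reflections
    (hWl_one : (1 : W) ∈ Wl)
    (hWl_closed : ∀ w ∈ Wl, ∀ i : I,
      cs.length (cs.simple i * w) < cs.length w → cs.simple i * w ∈ Wl)
    -- `B_id(λ) = {b_λ}`
    (h𝔅_one : 𝔅 1 = {b})
    -- Kashiwara (1): closure under the raising operators, `E_i(B_w(λ)) ⊆ B_w(λ)`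
    (h_raise : ∀ (w : W) (i : I) (x y : X), x ∈ 𝔅 w → c.e i x = some y → y ∈ 𝔅 w)
    -- Kashiwara (2): if `s_i w < w` then `B_w(λ)` is obtained from the `e_i`-highest
    -- elements of `B_{s_i w}(λ)` by applying `f_i` arbitrarily many times
    (h_lower : ∀ (w : W) (i : I), cs.length (cs.simple i * w) < cs.length w →
      𝔅 w = {y | ∃ x ∈ 𝔅 (cs.simple i * w), c.e i x = none ∧
        ∃ d : ℕ, c.fIter i d x = some y})
    -- Kashiwara (3): the string property (extremality)
    (h_string : ∀ w : W, c.Extremal (𝔅 w))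
    -- containment mirrors Bruhat order on `W^λ`
    (h_contain : ∀ v ∈ Wl, ∀ w ∈ Wl, (𝔅 v ⊆ 𝔅 w ↔ bruhatLE cs v w))
    -- the Demazure atoms `A_w(λ) = B_w(λ) ∖ ⋃_{v < w} B_v(λ)`
    (𝔄 : W → Set X)
    (h𝔄 : ∀ w : W, 𝔄 w = 𝔅 w \ ⋃ v ∈ {v | v ∈ Wl ∧ bruhatLT cs v w}, 𝔅 v)
    -- if `w ∈ W^λ`, `w < s_i w` and `s_i w ∉ W^λ`, then `w·λ = s_i w·λ`, and so
    -- `B_{s_i w}(λ) = B_w(λ)`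
    (h_coset : ∀ w ∈ Wl, ∀ i : I, cs.length w < cs.length (cs.simple i * w) →
      cs.simple i * w ∉ Wl → 𝔅 (cs.simple i * w) = 𝔅 w)
    (w : W) (hw : w ∈ Wl) (i : I) :
    (cs.length (cs.simple i * w) < cs.length w ∨ cs.simple i * w ∉ Wl →
        c.Fset i (𝔄 w) = 𝔄 w) ∧
      (cs.length w < cs.length (cs.simple i * w) → cs.simple i * w ∈ Wl →
        c.Fset i (𝔄 w) = 𝔄 w ∪ 𝔄 (cs.simple i * w) ∧
          Disjoint (𝔄 w) (𝔄 (cs.simple i * w))) := by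
  classical
  -- membership helpers
  have hA : ∀ (v : W) (x : X), x ∈ 𝔄 v ↔
      x ∈ 𝔅 v ∧ ∀ u, u ∈ Wl → bruhatLT cs u v → x ∉ 𝔅 u := by
    intro v x
    rw [h𝔄 v]
    simp only [Set.mem_diff, Set.mem_iUnion, Set.mem_setOf_eq, not_exists, exists_prop,
      not_and]
    constructor
    · rintro ⟨h1, h2⟩
      exact ⟨h1, fun u hu hlt hx => h2 u ⟨hu, hlt⟩ hx⟩
    · rintro ⟨h1, h2⟩
      exact ⟨h1, fun u hu hx => h2 u hu.1 hu.2 hx⟩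
  have mem_up : ∀ (v : W) (i' : I) (d : ℕ) (u x : X),
      c.fIter i' d u = some x → x ∈ 𝔅 v → u ∈ 𝔅 v := by
    intro v i' d
    induction d with
    | zero =>
      intro u x h hx
      have : u = x := Option.some.inj h
      rw [this]; exact hx
    | succ d ih =>
      intro u x h hx
      have hh : (c.f i' u).bind (c.fIter i' d) = some x := h
      rcases Option.bind_eq_some_iff.mp hh with ⟨z, hz, hzd⟩
      exact h_raise v i' z u (ih z x hzd hx) ((c.ef i' u z).mp hz)
  have fclosed : ∀ v : W, cs.length (cs.simple i * v) < cs.length v →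
      ∀ (x y : X) (d : ℕ), x ∈ 𝔅 v → c.fIter i d x = some y → y ∈ 𝔅 v := by
    intro v hlv x y d hx hiter
    rw [h_lower v i hlv] at hx
    obtain ⟨u, hu, hune, d', hd'⟩ := hx
    rw [h_lower v i hlv]
    exact ⟨u, hu, hune, d' + d, c.fIter_add_eq i d' u x hd' d y hiter⟩
  have hdichot := cs.length_simple_mul w i
  constructor
  · -- case (a)
    intro hcase
    have hBcl : ∀ (x y : X) (d : ℕ), x ∈ 𝔅 w → c.fIter i d x = some y → y ∈ 𝔅 w := by
      rcases hdichot with hup | hdown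
      · -- ℓ(s i w) = ℓ w + 1, so we must have s i w ∉ Wl
        have hnot : cs.simple i * w ∉ Wl := by
          rcases hcase with h' | h'
          · omega
          · exact h'
        have hco := h_coset w hw i (by omega) hnot
        have hlv : cs.length (cs.simple i * (cs.simple i * w)) < cs.length (cs.simple i * w) := by
          rw [cs.simple_mul_simple_cancel_left]; omega
        intro x y d hx h
        have hx' : x ∈ 𝔅 (cs.simple i * w) := by rw [hco]; exact hx
        have := fclosed (cs.simple i * w) hlv x y d hx' h
        rw [hco] at this
        exact this
      · intro x y d hx h
        exact fclosed w (by omega) x y d hx h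
    apply Set.Subset.antisymm
    · rintro y ⟨x, hx, d, hd⟩
      have hxA := (hA w x).mp hx
      refine (hA w y).mpr ⟨hBcl x y d hxA.1 hd, ?_⟩
      intro u hu hult hyu
      exact hxA.2 u hu hult (mem_up u i d x y hd hyu)
    · intro x hx
      exact ⟨x, hx, 0, rfl⟩
  · -- case (b)
    intro hlen hswWl
    have hlen1 : cs.length (cs.simple i * w) = cs.length w + 1 := by
      rcases hdichot with h' | h'
      · exact h'
      · omega
    have hwlt : bruhatLT cs w (cs.simple i * w) := CrystalAux.bruhatLT_simple_mul cs hlen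
    have hlsw : cs.length (cs.simple i * (cs.simple i * w)) < cs.length (cs.simple i * w) := by
      rw [cs.simple_mul_simple_cancel_left]; omega
    have hBsw := h_lower (cs.simple i * w) i hlsw
    rw [cs.simple_mul_simple_cancel_left] at hBsw
    have hdisj : Disjoint (𝔄 w) (𝔄 (cs.simple i * w)) := by
      rw [Set.disjoint_left]
      intro x hxw hxsw
      exact ((hA _ x).mp hxsw).2 w hw hwlt ((hA w x).mp hxw).1
    refine ⟨?_, hdisj⟩
    apply Set.Subset.antisymm
    · -- Fset ⊆ A_w ∪ A_{s i w}
      rintro y ⟨x, hx, d, hd⟩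
      have hxA := (hA w x).mp hx
      by_cases hyB : y ∈ 𝔅 w
      · left
        refine (hA w y).mpr ⟨hyB, ?_⟩
        intro u hu hult hyu
        exact hxA.2 u hu hult (mem_up u i d x y hd hyu)
      · right
        -- x is the top of its i-string
        have hxtop : c.e i x = none := by
          rcases h_string w i x with hempty | ⟨u, hus, hutop, hsingle⟩ | hfull
          · exfalso
            have hmem : x ∈ 𝔅 w ∩ c.string i x := ⟨hxA.1, Relation.EqvGen.refl x⟩
            rw [hempty] at hmem
            exact hmem
          · have hmem : x ∈ 𝔅 w ∩ c.string i x := ⟨hxA.1, Relation.EqvGen.refl x⟩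
            rw [hsingle, Set.mem_singleton_iff] at hmem
            rw [hmem]
            exact hutop
          · exact absurd (hfull (c.fIter_sameString i d x y hd)) hyB
        have hyBsw : y ∈ 𝔅 (cs.simple i * w) := by
          rw [hBsw]
          exact ⟨x, hxA.1, hxtop, d, hd⟩
        refine (hA _ y).mpr ⟨hyBsw, ?_⟩
        intro v hv hvlt hyv
        have hxv : x ∈ 𝔅 v := mem_up v i d x y hd hyv
        by_cases hvw : v = w
        · exact hyB (hvw ▸ hyv)
        have hnle : ¬ bruhatLE cs v w := fun hle => hxA.2 v hv ⟨hle, hvw⟩ hxv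
        obtain ⟨hsvlen, hsvle⟩ := CrystalAux.bruhat_lift cs hlen hvlt.1 hnle
        have hBv := h_lower v i hsvlen
        have hxsv : x ∈ 𝔅 (cs.simple i * v) := by
          rw [hBv] at hxv
          obtain ⟨u', hu', hu'top, d', hd'⟩ := hxv
          rcases Nat.eq_zero_or_pos d' with h0 | hpos
          · subst h0
            have : u' = x := Option.some.inj hd'
            rw [← this]; exact hu'
          · exfalso
            obtain ⟨z, hz⟩ := c.fIter_pred i d' u' x hpos hd'
            have : c.e i x = some z := (c.ef i z x).mp hz
            rw [hxtop] at this
            cases this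
        have hsvWl : cs.simple i * v ∈ Wl := hWl_closed v hv i hsvlen
        have hsvne : cs.simple i * v ≠ w := by
          intro h
          apply hvlt.2
          rw [← h, cs.simple_mul_simple_cancel_left]
        exact hxA.2 (cs.simple i * v) hsvWl ⟨hsvle, hsvne⟩ hxsv
    · -- A_w ∪ A_{s i w} ⊆ Fset
      intro y hy
      rcases hy with hyw | hysw
      · exact ⟨y, hyw, 0, rfl⟩
      · have hyA := (hA _ y).mp hysw
        have hyBsw := hyA.1
        rw [hBsw] at hyBsw
        obtain ⟨u, huB, hutop, d, hd⟩ := hyBsw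
        refine ⟨u, ?_, d, hd⟩
        refine (hA w u).mpr ⟨huB, ?_⟩
        intro v hv hvlt huv
        have hvltsw : bruhatLT cs v (cs.simple i * w) :=
          CrystalAux.bruhatLT_of_lt_of_le cs hvlt hwlt.1
        rcases cs.length_simple_mul v i with hvup | hvdown
        · by_cases hsvWl : cs.simple i * v ∈ Wl
          · have hlsv : cs.length (cs.simple i * (cs.simple i * v)) <
                cs.length (cs.simple i * v) := by
              rw [cs.simple_mul_simple_cancel_left]; omega
            have hBsv := h_lower (cs.simple i * v) i hlsv
            rw [cs.simple_mul_simple_cancel_left] at hBsv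
            have hyBsv : y ∈ 𝔅 (cs.simple i * v) := by
              rw [hBsv]
              exact ⟨u, huv, hutop, d, hd⟩
            have hvsubw : 𝔅 v ⊆ 𝔅 w := (h_contain v hv w hw).mpr hvlt.1
            have hsvsubsw : 𝔅 (cs.simple i * v) ⊆ 𝔅 (cs.simple i * w) := by
              intro z hz
              rw [hBsv] at hz
              rw [hBsw]
              obtain ⟨u', hu', htop', d', hd'⟩ := hz
              exact ⟨u', hvsubw hu', htop', d', hd'⟩
            have hsvlesw : bruhatLE cs (cs.simple i * v) (cs.simple i * w) :=
              (h_contain _ hsvWl _ hswWl).mp hsvsubsw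
            have hsvnesw : cs.simple i * v ≠ cs.simple i * w := fun h =>
              hvlt.2 (mul_left_cancel h)
            exact hyA.2 (cs.simple i * v) hsvWl ⟨hsvlesw, hsvnesw⟩ hyBsv
          · have hco := h_coset v hv i (by omega) hsvWl
            have hlsv : cs.length (cs.simple i * (cs.simple i * v)) <
                cs.length (cs.simple i * v) := by
              rw [cs.simple_mul_simple_cancel_left]; omega
            have hyBv : y ∈ 𝔅 v := by
              have h1 : u ∈ 𝔅 (cs.simple i * v) := by rw [hco]; exact huv
              have h2 := fclosed (cs.simple i * v) hlsv u y d h1 hd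
              rw [hco] at h2
              exact h2
            exact hyA.2 v hv hvltsw hyBv
        · have hyBv : y ∈ 𝔅 v := fclosed v (by omega) u y d huv hd
          exact hyA.2 v hv hvltsw hyBv
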